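/- Let φ be an automorphism of a free group F with basis X, and let C be a bounded cancellation constant for φ. Suppose w ∈ F and k ≥ 0 are such that φ^k(w) contains (as a subword of its reduced form) a subword β with |φ(β)| ≥ λ|β| for some λ > 1 (and this property persists under iteration, i.e., every φ^j_#-image of β lies in a λ-expanding set) and |β| > 2C/(λ−1). Then |φ^{k+m}(w)| ≥ λ^m(|β| − 2C/(λ−1)) for all m ≥ 0; in particular |φ^n(w)| → ∞ exponentially. -/

import Mathlib

open Filter

/-- Reduced word length of an element of a free group. -/
def wordLen {α : Type*} [DecidableEq α] (w : FreeGroup α) : ℕ :=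
  (FreeGroup.toWord w).length

/-- `m` occurs as a subword of the reduced word `w` (a splitting with no cancellation). -/
def IsSubword {α : Type*} [DecidableEq α] (m w : FreeGroup α) : Prop :=
  ∃ u v : FreeGroup α, w = u * m * v ∧
    wordLen w = wordLen u + wordLen m + wordLen v

namespace Stmt13Aux

open FreeGroup List

variable {α : Type*} [DecidableEq α]

def NoCancel (L : List (α × Bool)) : Prop :=
  List.Chain' (fun p q => ¬(p.1 = q.1 ∧ p.2 = !q.2)) L

lemma reduce_eq_self_of_noCancel {L : List (α × Bool)} (h : NoCancel L) :
    FreeGroup.reduce L = L := by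
  induction L with
  | nil => rfl
  | cons p t ih =>
    have ht : FreeGroup.reduce t = t := ih h.tail
    rw [FreeGroup.reduce.cons, ht]
    cases t with
    | nil => rfl
    | cons q t' =>
      have hpq : ¬(p.1 = q.1 ∧ p.2 = !q.2) := (List.isChain_cons_cons.mp h).1
      simp [hpq]

lemma noCancel_of_reduce_eq_self {L : List (α × Bool)} (h : FreeGroup.reduce L = L) :
    NoCancel L := by
  induction L with
  | nil => exact List.isChain_nil
  | cons p t ih =>
    rw [FreeGroup.reduce.cons] at h
    cases hr : FreeGroup.reduce t with
    | nil =>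
      rw [hr] at h
      simp only at h
      have ht : t = [] := by injection h with _ h2; exact h2.symm
      subst ht
      simp [NoCancel, List.Chain', List.isChain_singleton]
    | cons q t' =>
      rw [hr] at h
      simp only at h
      by_cases hc : p.1 = q.1 ∧ p.2 = !q.2
      · exfalso
        rw [if_pos hc] at h
        have hred : FreeGroup.Red t (q :: t') := hr ▸ FreeGroup.reduce.red
        have hlen1 : t'.length + 1 ≤ t.length := by
          have := FreeGroup.Red.length_le hred; simpa using this
        have hlen2 : t'.length = t.length + 1 := by
          have := congrArg List.length h; simpa using this
        omega
      · rw [if_neg hc] at h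
        have ht : t = q :: t' := by injection h with _ h2; exact h2.symm
        have htr : FreeGroup.reduce t = t := by rw [hr, ht]
        have := ih htr
        rw [ht]
        exact List.isChain_cons_cons.mpr ⟨hc, ht ▸ this⟩

lemma reduce_append_left {a b : List (α × Bool)} (h : FreeGroup.reduce (a ++ b) = a ++ b) :
    FreeGroup.reduce a = a :=
  reduce_eq_self_of_noCancel ((List.isChain_append.mp (noCancel_of_reduce_eq_self h)).1)

lemma reduce_append_right {a b : List (α × Bool)} (h : FreeGroup.reduce (a ++ b) = a ++ b) :
    FreeGroup.reduce b = b :=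
  reduce_eq_self_of_noCancel ((List.isChain_append.mp (noCancel_of_reduce_eq_self h)).2.1)

lemma junction {a b : List (α × Bool)} (ha : FreeGroup.reduce a = a)
    (hb : FreeGroup.reduce b = b) (hab : FreeGroup.reduce (a ++ b) ≠ a ++ b) :
    ∃ (x : α) (c : Bool) (a' b' : List (α × Bool)),
      a = a' ++ [(x, c)] ∧ b = (x, !c) :: b' := by
  have hnc : ¬ NoCancel (a ++ b) := fun h => hab (reduce_eq_self_of_noCancel h)
  rcases List.eq_nil_or_concat a with rfl | ⟨a', p, rfl⟩
  · exact absurd (by simpa using hb) hab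
  rcases b with _ | ⟨q, b'⟩
  · exact absurd (by simpa using ha) hab
  by_cases hR : p.1 = q.1 ∧ p.2 = !q.2
  · refine ⟨p.1, p.2, a', b', by simp, ?_⟩
    obtain ⟨h1, h2⟩ := hR
    have hq : q = (p.1, !p.2) := by
      cases p; cases q; simp_all
    rw [hq]
  · exfalso
    apply hnc
    rw [NoCancel, List.Chain', List.isChain_append]
    refine ⟨noCancel_of_reduce_eq_self ha, noCancel_of_reduce_eq_self hb, ?_⟩
    intro x hx y hy
    simp [List.getLast?_concat] at hx
    simp at hy
    subst hx; subst hy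
    exact hR

/-- Cancellation structure for products of reduced words. -/
lemma cancel_struct : ∀ (n : ℕ) (a b : List (α × Bool)), a.length ≤ n →
    FreeGroup.reduce a = a → FreeGroup.reduce b = b →
    ∃ p s q : List (α × Bool), a = p ++ s ∧ b = FreeGroup.invRev s ++ q ∧
      FreeGroup.reduce (a ++ b) = p ++ q := by
  intro n
  induction n with
  | zero =>
    intro a b hn ha hb
    have : a = [] := List.eq_nil_of_length_eq_zero (Nat.le_zero.mp hn)
    subst this
    exact ⟨[], [], b, by simp, by simp [FreeGroup.invRev], by simpa using hb⟩
  | succ n ih =>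
    intro a b hn ha hb
    by_cases hred : FreeGroup.reduce (a ++ b) = a ++ b
    · exact ⟨a, [], b, by simp, by simp [FreeGroup.invRev], by simpa using hred⟩
    · obtain ⟨x, c, a', b', rfl, rfl⟩ := junction ha hb hred
      have ha' : FreeGroup.reduce a' = a' := reduce_append_left ha
      have hb' : FreeGroup.reduce b' = b' := by
        have : ((x, !c) :: b' : List (α × Bool)) = [(x, !c)] ++ b' := rfl
        exact reduce_append_right (this ▸ hb)
      have hstep : FreeGroup.Red.Step (a' ++ [(x, c)] ++ ((x, !c) :: b')) (a' ++ b') := by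
        have := @FreeGroup.Red.Step.not α a' b' x c
        simpa using this
      have heq : FreeGroup.reduce (a' ++ [(x, c)] ++ ((x, !c) :: b')) =
          FreeGroup.reduce (a' ++ b') := FreeGroup.reduce.Step.eq hstep
      have hlen : a'.length ≤ n := by
        have := hn; simp at this; omega
      obtain ⟨p, s, q, hps, hq, hr⟩ := ih a' b' hlen ha' hb'
      refine ⟨p, s ++ [(x, c)], q, by rw [hps, List.append_assoc], ?_, by rw [heq, hr]⟩
      have : FreeGroup.invRev (s ++ [(x, c)]) = (x, !c) :: FreeGroup.invRev s := by
        simp [FreeGroup.invRev]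
      rw [this, hq]
      rfl

lemma toWord_mul_struct (x y : FreeGroup α) :
    ∃ p s q : List (α × Bool), x.toWord = p ++ s ∧ y.toWord = FreeGroup.invRev s ++ q ∧
      (x * y).toWord = p ++ q := by
  obtain ⟨p, s, q, h1, h2, h3⟩ := cancel_struct x.toWord.length x.toWord y.toWord le_rfl
    (FreeGroup.reduce_toWord x) (FreeGroup.reduce_toWord y)
  refine ⟨p, s, q, h1, h2, ?_⟩
  have : x * y = FreeGroup.mk (x.toWord ++ y.toWord) := by
    rw [← FreeGroup.mul_mk, FreeGroup.mk_toWord, FreeGroup.mk_toWord]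
  rw [this, FreeGroup.toWord_mk, h3]

lemma subword_of_split (x : FreeGroup α) (a b c : List (α × Bool))
    (h : x.toWord = a ++ b ++ c) :
    x = FreeGroup.mk a * FreeGroup.mk b * FreeGroup.mk c ∧
    wordLen (FreeGroup.mk a) = a.length ∧ wordLen (FreeGroup.mk b) = b.length ∧
    wordLen (FreeGroup.mk c) = c.length ∧
    wordLen x = wordLen (FreeGroup.mk a) + wordLen (FreeGroup.mk b) + wordLen (FreeGroup.mk c) := by
  have hred : FreeGroup.reduce (a ++ b ++ c) = a ++ b ++ c := by
    rw [← h]; exact FreeGroup.reduce_toWord x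
  have hab : FreeGroup.reduce (a ++ b) = a ++ b := reduce_append_left hred
  have ha : FreeGroup.reduce a = a := reduce_append_left hab
  have hb : FreeGroup.reduce b = b := reduce_append_right hab
  have hc : FreeGroup.reduce c = c := reduce_append_right hred
  have hx : x = FreeGroup.mk a * FreeGroup.mk b * FreeGroup.mk c := by
    rw [FreeGroup.mul_mk, FreeGroup.mul_mk, ← h, FreeGroup.mk_toWord]
  have la : wordLen (FreeGroup.mk a) = a.length := by
    rw [wordLen, FreeGroup.toWord_mk, ha]
  have lb : wordLen (FreeGroup.mk b) = b.length := by
    rw [wordLen, FreeGroup.toWord_mk, hb]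
  have lc : wordLen (FreeGroup.mk c) = c.length := by
    rw [wordLen, FreeGroup.toWord_mk, hc]
  refine ⟨hx, la, lb, lc, ?_⟩
  rw [la, lb, lc, wordLen, h]
  simp [Nat.add_assoc]

lemma isSubword_of_split (x : FreeGroup α) (a b c : List (α × Bool))
    (h : x.toWord = a ++ b ++ c) : IsSubword (FreeGroup.mk b) x := by
  obtain ⟨hx, _, _, _, hl⟩ := subword_of_split x a b c h
  exact ⟨FreeGroup.mk a, FreeGroup.mk c, hx, hl⟩

lemma wordLen_mul_le (x y : FreeGroup α) : wordLen (x * y) ≤ wordLen x + wordLen y := by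
  have := (FreeGroup.toWord_mul_sublist x y).length_le
  simpa [wordLen] using this

end Stmt13Aux

namespace Stmt13Aux

lemma step_lemma {X : Type*} [DecidableEq X] (φ : MulAut (FreeGroup X)) (C : ℕ)
    (hbc : ∀ u v : FreeGroup X, wordLen (u * v) = wordLen u + wordLen v →
      (wordLen (φ u) : ℝ) + (wordLen (φ v) : ℝ) - C ≤ (wordLen (φ (u * v)) : ℝ))
    (lam : ℝ) (hlam : 1 < lam) (S : Set (FreeGroup X))
    (hSclosed : ∀ s ∈ S, ∀ u m v : FreeGroup X,
      φ s = u * m * v → wordLen (φ s) = wordLen u + wordLen m + wordLen v →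
      wordLen u ≤ C → wordLen v ≤ C → m ∈ S)
    (hSexp : ∀ s ∈ S, lam * (wordLen s : ℝ) ≤ (wordLen (φ s) : ℝ))
    (s W : FreeGroup X) (hsS : s ∈ S) (hsub : IsSubword s W)
    (hlen : 2 * C / (lam - 1) ≤ (wordLen s : ℝ)) :
    ∃ s' : FreeGroup X, s' ∈ S ∧ IsSubword s' (φ W) ∧
      lam * (wordLen s : ℝ) - 2 * C ≤ (wordLen s' : ℝ) := by
  obtain ⟨u, v, rfl, hlensum⟩ := hsub
  have hle1 := wordLen_mul_le u s
  have hle2 := wordLen_mul_le (u * s) v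
  have h1 : wordLen (u * s) = wordLen u + wordLen s := by omega
  have h2 : wordLen (u * s * v) = wordLen (u * s) + wordLen v := by omega
  obtain ⟨p1, s1, q1, hA, hB, hP1⟩ := toWord_mul_struct (φ u) (φ s)
  have hP1' : (φ (u * s)).toWord = p1 ++ q1 := by rw [map_mul]; exact hP1
  have lA : wordLen (φ u) = p1.length + s1.length := by rw [wordLen, hA]; simp
  have lB : wordLen (φ s) = s1.length + q1.length := by
    rw [wordLen, hB]; simp [FreeGroup.invRev_length]
  have lP1 : wordLen (φ (u * s)) = p1.length + q1.length := by rw [wordLen, hP1']; simp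
  have hbc1 := hbc u s h1
  rw [lA, lB, lP1] at hbc1
  push_cast at hbc1
  have hs1 : 2 * s1.length ≤ C := by
    have : (2 * s1.length : ℝ) ≤ C := by push_cast; linarith
    exact_mod_cast this
  obtain ⟨P, s2, q2, hPq, hD, hW⟩ := toWord_mul_struct (φ (u * s)) (φ v)
  have hWword : (φ (u * s * v)).toWord = P ++ q2 := by rw [map_mul]; exact hW
  have lD : wordLen (φ v) = s2.length + q2.length := by
    rw [wordLen, hD]; simp [FreeGroup.invRev_length]
  have lW : wordLen (φ (u * s * v)) = P.length + q2.length := by rw [wordLen, hWword]; simp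
  have lP2 : P.length + s2.length = p1.length + q1.length := by
    have := congrArg List.length (hP1'.symm.trans hPq)
    simpa using this.symm
  have hbc2 := hbc (u * s) v h2
  rw [lP1, lD, lW] at hbc2
  push_cast at hbc2
  have hs2 : 2 * s2.length ≤ C := by
    have hP2R : (P.length : ℝ) + s2.length = p1.length + q1.length := by exact_mod_cast lP2
    have : (2 * s2.length : ℝ) ≤ C := by push_cast; linarith
    exact_mod_cast this
  -- s1 + s2 fit inside the word of φ s
  have hexp := hSexp s hsS
  have hlam0 : (0:ℝ) ≤ lam := by linarith
  have hne : lam - 1 ≠ 0 := by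
    intro h; rw [sub_eq_zero] at h; exact absurd h.symm (ne_of_lt hlam)
  have hkey : lam * (2 * C / (lam - 1)) - 2 * C = 2 * C / (lam - 1) := by
    field_simp
    ring
  have hcl0 : (0:ℝ) ≤ 2 * C / (lam - 1) := div_nonneg (by positivity) (by linarith)
  have hBbigR : (s1.length : ℝ) + s2.length ≤ (wordLen (φ s) : ℝ) := by
    have hmul : lam * (2 * C / (lam - 1)) ≤ lam * (wordLen s : ℝ) :=
      mul_le_mul_of_nonneg_left hlen hlam0
    have c1 : (2 * s1.length : ℝ) ≤ C := by exact_mod_cast hs1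
    have c2 : (2 * s2.length : ℝ) ≤ C := by exact_mod_cast hs2
    push_cast at c1 c2 ⊢
    linarith
  have hBbig : s1.length + s2.length ≤ wordLen (φ s) := by exact_mod_cast hBbigR
  have hq1ge : s2.length ≤ q1.length := by omega
  set j := q1.length - s2.length with hj
  have hcomb : p1 ++ q1 = P ++ s2 := hP1'.symm.trans hPq
  have hsplit : (p1 ++ q1.take j) ++ q1.drop j = P ++ s2 := by
    rw [List.append_assoc, List.take_append_drop]; exact hcomb
  have hdlen : (q1.drop j).length = s2.length := by
    simp only [List.length_drop]; omega
  obtain ⟨hPdef, hs2def⟩ := List.append_inj' hsplit hdlen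
  set q1' := q1.take j with hq1'
  have hq1eq : q1 = q1' ++ s2 := by
    conv_lhs => rw [← List.take_append_drop j q1]
    rw [hs2def]
  have hBsplit : (φ s).toWord = FreeGroup.invRev s1 ++ q1' ++ s2 := by
    rw [hB, hq1eq, List.append_assoc]
  obtain ⟨hxeq, la', lb', lc', hsum'⟩ :=
    subword_of_split (φ s) (FreeGroup.invRev s1) q1' s2 hBsplit
  have hs'S : FreeGroup.mk q1' ∈ S := by
    refine hSclosed s hsS _ _ _ hxeq hsum' ?_ ?_
    · rw [la', FreeGroup.invRev_length]; omega
    · rw [lc']; omega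
  have hWsplit : (φ (u * s * v)).toWord = p1 ++ q1' ++ q2 := by
    rw [hWword, ← hPdef]
  refine ⟨FreeGroup.mk q1', hs'S, isSubword_of_split _ _ _ _ hWsplit, ?_⟩
  have hq1len : q1.length = q1'.length + s2.length := by
    rw [hq1eq]; simp
  have c1 : (2 * s1.length : ℝ) ≤ C := by exact_mod_cast hs1
  have c2 : (2 * s2.length : ℝ) ≤ C := by exact_mod_cast hs2
  have lBR : (wordLen (φ s) : ℝ) = s1.length + q1'.length + s2.length := by
    rw [lB, hq1len]; push_cast; ring
  rw [lb']
  push_cast at c1 c2 ⊢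
  linarith

end Stmt13Aux

theorem stmt13 {X : Type*} [DecidableEq X] (φ : MulAut (FreeGroup X)) (C : ℕ)
    (hbc : ∀ u v : FreeGroup X, wordLen (u * v) = wordLen u + wordLen v →
      (wordLen (φ u) : ℝ) + (wordLen (φ v) : ℝ) - C ≤ (wordLen (φ (u * v)) : ℝ))
    (lam : ℝ) (hlam : 1 < lam)
    (S : Set (FreeGroup X))
    -- S is closed under "apply φ and delete at most C letters from each end":
    (hSclosed : ∀ s ∈ S, ∀ u m v : FreeGroup X,
      φ s = u * m * v → wordLen (φ s) = wordLen u + wordLen m + wordLen v →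
      wordLen u ≤ C → wordLen v ≤ C → m ∈ S)
    (hSexp : ∀ s ∈ S, lam * (wordLen s : ℝ) ≤ (wordLen (φ s) : ℝ))
    (w : FreeGroup X) (k : ℕ) (β : FreeGroup X)
    (hβsub : IsSubword β ((φ ^ k) w)) (hβS : β ∈ S)
    (hβlong : 2 * C / (lam - 1) < (wordLen β : ℝ)) :
    (∀ m : ℕ, lam ^ m * ((wordLen β : ℝ) - 2 * C / (lam - 1)) ≤
      (wordLen ((φ ^ (k + m)) w) : ℝ)) ∧
    Tendsto (fun n : ℕ => (wordLen ((φ ^ n) w) : ℝ)) atTop atTop := by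
  set cl : ℝ := 2 * C / (lam - 1) with hcl
  have hlam0 : (0:ℝ) < lam := by linarith
  have hne : lam - 1 ≠ 0 := by
    intro h; rw [sub_eq_zero] at h; exact absurd h.symm (ne_of_lt hlam)
  have hkey : lam * cl - 2 * C = cl := by
    rw [hcl]; field_simp; ring
  have hc : (0:ℝ) < (wordLen β : ℝ) - cl := by linarith
  -- the inductive construction
  have key : ∀ m : ℕ, ∃ s : FreeGroup X, s ∈ S ∧ IsSubword s ((φ ^ (k + m)) w) ∧
      lam ^ m * ((wordLen β : ℝ) - cl) + cl ≤ (wordLen s : ℝ) := by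
    intro m
    induction m with
    | zero =>
      refine ⟨β, hβS, by simpa using hβsub, ?_⟩
      simp
    | succ m ih =>
      obtain ⟨s, hsS, hsub, hslen⟩ := ih
      have hpow : (0:ℝ) < lam ^ m := pow_pos hlam0 m
      have hslen' : cl ≤ (wordLen s : ℝ) := by nlinarith
      obtain ⟨s', hs'S, hs'sub, hs'len⟩ := Stmt13Aux.step_lemma φ C hbc lam hlam S
        hSclosed hSexp s ((φ ^ (k + m)) w) hsS hsub hslen'
      have hiter : (φ ^ (k + (m + 1))) w = φ ((φ ^ (k + m)) w) := by
        rw [← Nat.add_assoc, pow_succ']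
        rfl
      refine ⟨s', hs'S, by rwa [hiter], ?_⟩
      have hmul : lam * (lam ^ m * ((wordLen β : ℝ) - cl) + cl) ≤ lam * (wordLen s : ℝ) :=
        mul_le_mul_of_nonneg_left hslen (le_of_lt hlam0)
      have : lam ^ (m + 1) * ((wordLen β : ℝ) - cl) + cl =
          lam * (lam ^ m * ((wordLen β : ℝ) - cl) + cl) - 2 * C := by
        rw [pow_succ]; nlinarith [hkey]
      linarith
  have hcl0 : (0:ℝ) ≤ cl := div_nonneg (by positivity) (by linarith)
  have part1 : ∀ m : ℕ, lam ^ m * ((wordLen β : ℝ) - cl) ≤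
      (wordLen ((φ ^ (k + m)) w) : ℝ) := by
    intro m
    obtain ⟨s, _, ⟨u, v, _, hlen⟩, hslen⟩ := key m
    have : (wordLen s : ℝ) ≤ (wordLen ((φ ^ (k + m)) w) : ℝ) := by
      have : wordLen s ≤ wordLen ((φ ^ (k + m)) w) := by omega
      exact_mod_cast this
    linarith
  refine ⟨part1, ?_⟩
  have tlim : Tendsto (fun n : ℕ => lam ^ (n - k) * ((wordLen β : ℝ) - cl)) atTop atTop :=
    ((tendsto_pow_atTop_atTop_of_one_lt hlam).comp (tendsto_sub_atTop_nat k)).atTop_mul_const hc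
  refine tendsto_atTop_mono' atTop ?_ tlim
  filter_upwards [eventually_ge_atTop k] with n hn
  have := part1 (n - k)
  rwa [Nat.add_sub_cancel' hn] at this
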